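/- For any integer k, the Cygan distance between the centers of the isometric spheres I(C⁻¹BC⁻¹) and I(AᵏCBCA⁻ᵏ), given by the formula | |(2k+1) - √15·i|² + i(−2k√15 + 2·Im((1/2 − (√15/2)i)(−(1+4k)/2 − (√15/2)i))) |^{1/2}, equals √(4k² + 4k + 16), and this quantity is strictly greater than √2 + 2/√3 for every k ∈ ℤ. -/

import Mathlib

theorem cygan_distance_formula (k : ℤ) :
    Real.sqrt (Norm.norm
        (((Norm.norm (((2 * (k : ℝ) + 1 : ℝ) : ℂ) - (Real.sqrt 15 : ℂ) * Complex.I)) ^ 2 : ℂ)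
          + Complex.I * (((-2 * (k : ℝ) * Real.sqrt 15 : ℝ) : ℂ)
            + 2 * (((((1 / 2 : ℂ) - ((Real.sqrt 15 / 2 : ℝ) : ℂ) * Complex.I) *
                (-(((1 + 4 * (k : ℝ)) / 2 : ℝ) : ℂ) - ((Real.sqrt 15 / 2 : ℝ) : ℂ) * Complex.I)).im : ℝ) : ℂ))))
      = Real.sqrt (4 * (k : ℝ) ^ 2 + 4 * (k : ℝ) + 16) ∧
    Real.sqrt (4 * (k : ℝ) ^ 2 + 4 * (k : ℝ) + 16) > Real.sqrt 2 + 2 / Real.sqrt 3 := by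
  have hs : Real.sqrt 15 ^ 2 = 15 := Real.sq_sqrt (by norm_num)
  constructor
  · have h1 : (Norm.norm (((2 * (k : ℝ) + 1 : ℝ) : ℂ) - (Real.sqrt 15 : ℂ) * Complex.I)) ^ 2
        = (2 * (k : ℝ) + 1) ^ 2 + 15 := by
      rw [Complex.sq_norm, Complex.normSq_apply]
      simp [Complex.sub_re, Complex.sub_im]
      nlinarith [hs]
    have h2 : ((((1 / 2 : ℂ) - ((Real.sqrt 15 / 2 : ℝ) : ℂ) * Complex.I) *
          (-(((1 + 4 * (k : ℝ)) / 2 : ℝ) : ℂ) - ((Real.sqrt 15 / 2 : ℝ) : ℂ) * Complex.I)).im)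
        = (k : ℝ) * Real.sqrt 15 := by
      simp [Complex.mul_im]
      ring
    rw [show (((Norm.norm (((2 * (k : ℝ) + 1 : ℝ) : ℂ) - (Real.sqrt 15 : ℂ) * Complex.I) : ℝ)) : ℂ) ^ 2
        = (((Norm.norm (((2 * (k : ℝ) + 1 : ℝ) : ℂ) - (Real.sqrt 15 : ℂ) * Complex.I)) ^ 2 : ℝ) : ℂ) by
      push_cast; ring, h1, h2]
    have h3 : (((((2 * (k : ℝ) + 1) ^ 2 + 15 : ℝ)) : ℂ)
        + Complex.I * (((-2 * (k : ℝ) * Real.sqrt 15 : ℝ) : ℂ) + 2 * (((k : ℝ) * Real.sqrt 15 : ℝ) : ℂ)))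
        = ((4 * (k : ℝ) ^ 2 + 4 * (k : ℝ) + 16 : ℝ) : ℂ) := by
      push_cast
      ring
    rw [h3, Complex.norm_real, Real.norm_eq_abs, abs_of_nonneg (by nlinarith [sq_nonneg ((k:ℝ))])]
  · have h4 : (Real.sqrt 2 + 2 / Real.sqrt 3) ^ 2 < 15 := by
      have h2 : Real.sqrt 2 ^ 2 = 2 := Real.sq_sqrt (by norm_num)
      have h3 : Real.sqrt 3 ^ 2 = 3 := Real.sq_sqrt (by norm_num)
      have h3p : (0:ℝ) < Real.sqrt 3 := Real.sqrt_pos.mpr (by norm_num)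
      have h6 : Real.sqrt 2 * (2 / Real.sqrt 3) < 3 := by
        rw [show Real.sqrt 2 * (2 / Real.sqrt 3) = 2 * Real.sqrt 2 / Real.sqrt 3 by ring,
          div_lt_iff₀ h3p]
        nlinarith [Real.sqrt_nonneg 2, Real.sqrt_nonneg 3]
      have : (2 / Real.sqrt 3) ^ 2 = 4 / 3 := by
        rw [div_pow, h3]; norm_num
      nlinarith [Real.sqrt_nonneg 2, Real.sqrt_nonneg 3]
    have h5 : 15 ≤ 4 * (k : ℝ) ^ 2 + 4 * (k : ℝ) + 16 := by
      have hz : (1:ℤ) ≤ (2*k+1)^2 := by rcases lt_or_ge k 0 with h|h <;> nlinarith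
      have hz' : (1:ℝ) ≤ (2*(k:ℝ)+1)^2 := by exact_mod_cast hz
      nlinarith
    have hpos : (0:ℝ) ≤ Real.sqrt 2 + 2 / Real.sqrt 3 := by positivity
    calc Real.sqrt 2 + 2 / Real.sqrt 3 < Real.sqrt 15 := by
          nlinarith [Real.sq_sqrt (show (0:ℝ) ≤ 15 by norm_num), Real.sqrt_nonneg 15, hpos]
      _ ≤ Real.sqrt (4 * (k : ℝ) ^ 2 + 4 * (k : ℝ) + 16) := Real.sqrt_le_sqrt (by linarith)
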